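/- For every integer M ≥ 2 and every ε > 0 there exists C₀ > 1 such that for all real C ≥ C₀ and all integers d ≥ 1 one has Σ_{i=1}^{d} C^{−i} (d+1)^M/(d+1−i)^M ≤ ε. Equivalently, for fixed M ≥ 2, ε₂(C, M) := sup_{d≥1} Σ_{i=1}^{d} C^{−i}(d+1)^M/(d+1−i)^M tends to 0 as C → ∞. -/

import Mathlib

/-- For every integer `M ≥ 2` and every `ε > 0` there exists `C₀ > 1` such that
for all real `C ≥ C₀` and all integers `d ≥ 1`,
`∑_{i=1}^{d} C^{-i} (d+1)^M / (d+1-i)^M ≤ ε`; i.e. for fixed `M ≥ 2` the quantity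
`ε₂(C, M) = sup_{d ≥ 1} ∑_{i=1}^d C^{-i} (d+1)^M/(d+1-i)^M` tends to `0` as `C → ∞`. -/
theorem epsilon_two_tendsto_zero (M : ℕ) (hM : 2 ≤ M) :
    ∀ ε : ℝ, 0 < ε → ∃ C₀ : ℝ, 1 < C₀ ∧ ∀ C : ℝ, C₀ ≤ C → ∀ d : ℕ, 1 ≤ d →
      ∑ i ∈ Finset.Icc 1 d,
        ((d : ℝ) + 1) ^ M / (C ^ i * ((d : ℝ) + 1 - (i : ℝ)) ^ M) ≤ ε := by
  intro ε hε
  refine ⟨2 ^ (M + 1) * (1 + 1 / ε), ?_, ?_⟩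
  · have h1 : (2 : ℝ) ≤ 2 ^ (M + 1) := by
      calc (2:ℝ) = 2 ^ 1 := by norm_num
        _ ≤ 2 ^ (M + 1) := pow_le_pow_right₀ one_le_two (by omega)
    nlinarith [one_div_pos.mpr hε]
  · intro C hC d hd
    have hεinv : 0 < 1 / ε := one_div_pos.mpr hε
    have hpow : (0:ℝ) < 2 ^ (M + 1) := by positivity
    have hC0 : (0:ℝ) < C := lt_of_lt_of_le (by nlinarith) hC
    set r : ℝ := 2 ^ M / C with hr
    have hr0 : 0 ≤ r := by positivity
    have hC2 : 2 ^ (M + 1) ≤ C := by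
      refine le_trans ?_ hC
      nlinarith
    have hr_half : r ≤ 1 / 2 := by
      rw [hr, div_le_div_iff₀ hC0 (by norm_num)]
      have h2 : (2:ℝ) ^ M * 2 = 2 ^ (M + 1) := by ring
      nlinarith
    have hr1 : r < 1 := lt_of_le_of_lt hr_half (by norm_num)
    -- termwise bound
    have hterm : ∀ i ∈ Finset.Icc 1 d,
        ((d : ℝ) + 1) ^ M / (C ^ i * ((d : ℝ) + 1 - (i : ℝ)) ^ M) ≤ r ^ i := by
      intro i hi
      rw [Finset.mem_Icc] at hi
      have hi1 : 1 ≤ i := hi.1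
      have hid : i ≤ d := hi.2
      have hdi : (1:ℝ) ≤ (d : ℝ) + 1 - (i : ℝ) := by
        have : (i:ℝ) ≤ (d:ℝ) := by exact_mod_cast hid
        linarith
      have hdi0 : (0:ℝ) < (d : ℝ) + 1 - (i : ℝ) := by linarith
      have key : (d : ℝ) + 1 ≤ ((i:ℝ) + 1) * ((d : ℝ) + 1 - (i : ℝ)) := by
        have h1 : (1:ℝ) ≤ (i:ℝ) := by exact_mod_cast hi1
        nlinarith
      have h2i : (i:ℝ) + 1 ≤ 2 ^ i := by
        exact_mod_cast Nat.succ_le_of_lt (Nat.lt_two_pow_self (n := i))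
      have key2 : ((d : ℝ) + 1) ^ M ≤ (2 ^ i) ^ M * ((d : ℝ) + 1 - (i : ℝ)) ^ M := by
        calc ((d : ℝ) + 1) ^ M ≤ (((i:ℝ) + 1) * ((d : ℝ) + 1 - (i : ℝ))) ^ M :=
              pow_le_pow_left₀ (by positivity) key M
          _ ≤ ((2:ℝ) ^ i * ((d : ℝ) + 1 - (i : ℝ))) ^ M := by
              apply pow_le_pow_left₀ (by positivity)
              exact mul_le_mul_of_nonneg_right h2i (by linarith)
          _ = (2 ^ i) ^ M * ((d : ℝ) + 1 - (i : ℝ)) ^ M := mul_pow _ _ _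
      have hden : (0:ℝ) < C ^ i * ((d : ℝ) + 1 - (i : ℝ)) ^ M := by positivity
      rw [div_le_iff₀ hden, hr, div_pow, div_mul_eq_mul_div, le_div_iff₀ (by positivity)]
      calc ((d : ℝ) + 1) ^ M * C ^ i ≤ ((2 ^ i) ^ M * ((d : ℝ) + 1 - (i : ℝ)) ^ M) * C ^ i :=
            mul_le_mul_of_nonneg_right key2 (by positivity)
        _ = (2 ^ M) ^ i * (C ^ i * ((d : ℝ) + 1 - (i : ℝ)) ^ M) := by
            rw [← pow_mul, ← pow_mul, Nat.mul_comm]; ring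
    have hsum : ∑ i ∈ Finset.Icc 1 d,
        ((d : ℝ) + 1) ^ M / (C ^ i * ((d : ℝ) + 1 - (i : ℝ)) ^ M)
        ≤ ∑ i ∈ Finset.Icc 1 d, r ^ i := Finset.sum_le_sum hterm
    have hgeo : ∑ i ∈ Finset.Icc 1 d, r ^ i ≤ r ^ 1 / (1 - r) := by
      rw [show Finset.Icc 1 d = Finset.Ico 1 (d + 1) by rw [Finset.Ico_add_one_right_eq_Icc]]
      exact geom_sum_Ico_le_of_lt_one hr0 hr1
    have hfin : r ^ 1 / (1 - r) ≤ ε := by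
      rw [pow_one]
      have h1r : (1:ℝ)/2 ≤ 1 - r := by linarith
      have : r / (1 - r) ≤ 2 * r := by
        rw [div_le_iff₀ (by linarith)]
        nlinarith
      refine this.trans ?_
      have hεε : ε * (1 / ε) = 1 := by field_simp
      have hCε : 2 ^ (M + 1) ≤ C * ε := by nlinarith
      have h2r : 2 * r = 2 ^ (M + 1) / C := by rw [hr]; ring
      rw [h2r, div_le_iff₀ hC0]
      nlinarith
    linarith
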